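/- Dimension of the ansatz spaces: viewing a kn×kn matrix pencil ℒ(λ) = Xλ + Y as the pair (X, Y) of kn×kn real matrices, 𝕄₁(P) and 𝕄₂(P) are real linear subspaces of the space of all kn×kn matrix pencils, and dim 𝕄₁(P) = dim 𝕄₂(P) = k(k−1)n² + k. This holds whether P is regular or singular. -/

import Mathlib

open Polynomial Matrix

noncomputable section

/-- `Φ_k(λ) ⊗ I_n` as a `kn × n` polynomial matrix: its `i`-th block row (0-based)
is `φ_{k-1-i}(λ) I_n`. -/
def PhiMat (n k : ℕ) (φ : ℕ → Polynomial ℝ) :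
    Matrix (Fin k × Fin n) (Fin n) (Polynomial ℝ) :=
  Matrix.of fun p s => if p.2 = s then φ (k - 1 - p.1.val) else 0

/-- The matrix polynomial `P(λ) = Σ_{i=0}^k P_i φ_i(λ)`. -/
def matP (n k : ℕ) (φ : ℕ → Polynomial ℝ) (Pm : ℕ → Matrix (Fin n) (Fin n) ℝ) :
    Matrix (Fin n) (Fin n) (Polynomial ℝ) :=
  Matrix.of fun r s => ∑ i ∈ Finset.range (k + 1), C (Pm i r s) * φ i

/-- `v ⊗ Q` as a `kn × n` polynomial matrix. -/
def vKron (n k : ℕ) (v : Fin k → ℝ) (Q : Matrix (Fin n) (Fin n) (Polynomial ℝ)) :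
    Matrix (Fin k × Fin n) (Fin n) (Polynomial ℝ) :=
  Matrix.of fun p s => C (v p.1) * Q p.2 s

/-- `v^T ⊗ Q` as an `n × kn` polynomial matrix. -/
def vKronRow (n k : ℕ) (v : Fin k → ℝ) (Q : Matrix (Fin n) (Fin n) (Polynomial ℝ)) :
    Matrix (Fin n) (Fin k × Fin n) (Polynomial ℝ) :=
  Matrix.of fun s q => C (v q.1) * Q s q.2

/-- A matrix pencil: a matrix polynomial each of whose entries has degree at most `1`. -/
def IsPencil {m m' : Type*} (L : Matrix m m' (Polynomial ℝ)) : Prop :=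
  ∀ p q, (L p q).degree ≤ 1

/-- `ℒ(λ) ∈ 𝕄₁(P)` with ansatz vector `v`, i.e. `ℒ(λ)(Φ_k(λ) ⊗ I_n) = v ⊗ P(λ)`. -/
def Ansatz1 (n k : ℕ) (φ : ℕ → Polynomial ℝ) (Pm : ℕ → Matrix (Fin n) (Fin n) ℝ)
    (L : Matrix (Fin k × Fin n) (Fin k × Fin n) (Polynomial ℝ)) (v : Fin k → ℝ) : Prop :=
  L * PhiMat n k φ = vKron n k v (matP n k φ Pm)

/-- `ℒ(λ) ∈ 𝕄₂(P)` with ansatz vector `w`, i.e. `(Φ_k(λ)^T ⊗ I_n) ℒ(λ) = w^T ⊗ P(λ)`. -/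
def Ansatz2 (n k : ℕ) (φ : ℕ → Polynomial ℝ) (Pm : ℕ → Matrix (Fin n) (Fin n) ℝ)
    (L : Matrix (Fin k × Fin n) (Fin k × Fin n) (Polynomial ℝ)) (w : Fin k → ℝ) : Prop :=
  (PhiMat n k φ)ᵀ * L = vKronRow n k w (matP n k φ Pm)

/-- The anchor pencil `F_Φ^P(λ) = [m_Φ^P(λ); M_Φ(λ)]`. -/
def FPhi (n k : ℕ) (a b c : ℕ → ℝ) (Pm : ℕ → Matrix (Fin n) (Fin n) ℝ) :
    Matrix (Fin k × Fin n) (Fin k × Fin n) (Polynomial ℝ) :=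
  Matrix.of fun p q =>
    if p.1.val = 0 then
      -- the block row m_Φ^P(λ)
      if q.1.val = 0 then
        C ((a (k - 1))⁻¹) * (X - C (b (k - 1))) * C (Pm k p.2 q.2) + C (Pm (k - 1) p.2 q.2)
      else if q.1.val = 1 then
        C (Pm (k - 2) p.2 q.2) - C (c (k - 1) / a (k - 1)) * C (Pm k p.2 q.2)
      else
        C (Pm (k - 1 - q.1.val) p.2 q.2)
    else
      -- the block rows M_Φ(λ) = M_Φ^⋆(λ) ⊗ I_n
      (if q.1.val + 1 = p.1.val then -C (a (k - 1 - p.1.val))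
       else if q.1.val = p.1.val then X - C (b (k - 1 - p.1.val))
       else if q.1.val = p.1.val + 1 then -C (c (k - 1 - p.1.val))
       else 0) * (if p.2 = q.2 then 1 else 0)

/-- The `kn × kn` real matrix `[v ⊗ I_n, B]`: first `n` columns form `v ⊗ I_n`,
the remaining `(k-1)n` columns form `B`. -/
def extCols (n k : ℕ) (v : Fin k → ℝ)
    (B : Matrix (Fin k × Fin n) (Fin (k - 1) × Fin n) ℝ) :
    Matrix (Fin k × Fin n) (Fin k × Fin n) ℝ :=
  Matrix.of fun p q =>
    if h : q.1.val = 0 then (if p.2 = q.2 then v p.1 else 0)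
    else B p (⟨q.1.val - 1, by have := q.1.isLt; omega⟩, q.2)

/-- The `kn × kn` real matrix `[w^T ⊗ I_n; B]`: first `n` rows form `w^T ⊗ I_n`,
the remaining `(k-1)n` rows form `B`. -/
def extRows (n k : ℕ) (w : Fin k → ℝ)
    (B : Matrix (Fin (k - 1) × Fin n) (Fin k × Fin n) ℝ) :
    Matrix (Fin k × Fin n) (Fin k × Fin n) ℝ :=
  Matrix.of fun p q =>
    if h : p.1.val = 0 then (if p.2 = q.2 then w q.1 else 0)
    else B (⟨p.1.val - 1, by have := p.1.isLt; omega⟩, p.2) q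

/-- A real matrix viewed as a constant matrix polynomial. -/
def liftC {m m' : Type*} (A : Matrix m m' ℝ) : Matrix m m' (Polynomial ℝ) :=
  A.map C

/-- Block transpose of a matrix consisting of `n × n` blocks: block `(i,j)` of `A^𝓑`
is block `(j,i)` of `A`. -/
def blockTr {n k1 k2 : ℕ} {R : Type*} (A : Matrix (Fin k1 × Fin n) (Fin k2 × Fin n) R) :
    Matrix (Fin k2 × Fin n) (Fin k1 × Fin n) R :=
  Matrix.of fun p q => A (q.1, p.2) (p.1, q.2)

/-- `rev_d Q(λ) = λ^d Q(1/λ)`, entrywise reversal of a matrix polynomial of degree at most `d`. -/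
def revMat {m m' : Type*} (d : ℕ) (L : Matrix m m' (Polynomial ℝ)) :
    Matrix m m' (Polynomial ℝ) :=
  Matrix.of fun p q => (L p q).reflect d

/-- Evaluation of a real matrix polynomial at a complex number. -/
def evalC {m m' : Type*} (α : ℂ) (L : Matrix m m' (Polynomial ℝ)) : Matrix m m' ℂ :=
  Matrix.of fun p q => aeval α (L p q)

/-- A matrix polynomial viewed as a matrix over the field `ℝ(λ)` of rational functions. -/
def liftRat {m m' : Type*} (L : Matrix m m' (Polynomial ℝ)) : Matrix m m' (RatFunc ℝ) :=
  L.map (algebraMap (Polynomial ℝ) (RatFunc ℝ))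

/-- `v ⊗ I_n` as a `kn × n` complex matrix. -/
def vKronC (n k : ℕ) (v : Fin k → ℝ) : Matrix (Fin k × Fin n) (Fin n) ℂ :=
  Matrix.of fun p s => if p.2 = s then (v p.1 : ℂ) else 0

/-- `v ⊗ I_n` as a `kn × n` matrix over `ℝ(λ)`. -/
def vKronRat (n k : ℕ) (v : Fin k → ℝ) : Matrix (Fin k × Fin n) (Fin n) (RatFunc ℝ) :=
  Matrix.of fun p s => if p.2 = s then RatFunc.C (v p.1) else 0

/-- The pencil `Xm λ + Ym` as a matrix polynomial. -/
def pencilPoly {m : Type*} (Xm Ym : Matrix m m ℝ) : Matrix m m (Polynomial ℝ) :=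
  Matrix.of fun p q => C (Xm p q) * X + C (Ym p q)

/-- `diag(P(λ), I_{(k-1)n})` as a `kn × kn` matrix polynomial. -/
def diagPI (n k : ℕ) (Pp : Matrix (Fin n) (Fin n) (Polynomial ℝ)) :
    Matrix (Fin k × Fin n) (Fin k × Fin n) (Polynomial ℝ) :=
  Matrix.of fun p q =>
    if p.1.val = 0 ∧ q.1.val = 0 then Pp p.2 q.2 else if p = q then 1 else 0

/-- `ℒ(λ)` is a linearization of `P(λ)`: there are `U(λ), V(λ)` with nonzero real constant
determinants such that `U(λ)ℒ(λ)V(λ) = diag(P(λ), I_{(k-1)n})`. -/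
def IsLinearization (n k : ℕ)
    (L : Matrix (Fin k × Fin n) (Fin k × Fin n) (Polynomial ℝ))
    (Pp : Matrix (Fin n) (Fin n) (Polynomial ℝ)) : Prop :=
  ∃ U V : Matrix (Fin k × Fin n) (Fin k × Fin n) (Polynomial ℝ),
    (∃ cu : ℝ, cu ≠ 0 ∧ U.det = C cu) ∧ (∃ cv : ℝ, cv ≠ 0 ∧ V.det = C cv) ∧
    U * L * V = diagPI n k Pp

/-- `ℒ(λ)` is a strong linearization of `P(λ)` (of degree `k`): it is a linearization and
`rev₁ ℒ(λ)` is a linearization of `rev_k P(λ)`. -/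
def IsStrongLin (n k : ℕ)
    (L : Matrix (Fin k × Fin n) (Fin k × Fin n) (Polynomial ℝ))
    (Pp : Matrix (Fin n) (Fin n) (Polynomial ℝ)) : Prop :=
  IsLinearization n k L Pp ∧ IsLinearization n k (revMat 1 L) (revMat k Pp)

namespace AnsatzDimAux

abbrev Mspace (n k : ℕ) := Matrix (Fin k × Fin n) (Fin k × Fin n) ℝ ×
  Matrix (Fin k × Fin n) (Fin k × Fin n) ℝ
abbrev Nspace (n k : ℕ) := Matrix (Fin k × Fin n) (Fin n) (Polynomial ℝ)
abbrev Ispace (n k : ℕ) := (Fin k × Fin n) × Fin n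
abbrev Dspace (k : ℕ) := (Fin k → ℝ) × (Fin k → ℝ)

/-- The scalar map `(x, y) ↦ ∑ⱼ (xⱼ λ + yⱼ) φ_{k-1-j}`. -/
def g0 (k : ℕ) (φ : ℕ → Polynomial ℝ) : Dspace k →ₗ[ℝ] Polynomial ℝ :=
  ∑ j : Fin k,
    ((LinearMap.toSpanSingleton ℝ (Polynomial ℝ) (X * φ (k - 1 - j.val))).comp
        ((LinearMap.proj j).comp (LinearMap.fst ℝ (Fin k → ℝ) (Fin k → ℝ))) +
      (LinearMap.toSpanSingleton ℝ (Polynomial ℝ) (φ (k - 1 - j.val))).comp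
        ((LinearMap.proj j).comp (LinearMap.snd ℝ (Fin k → ℝ) (Fin k → ℝ))))

lemma g0_apply (k : ℕ) (φ : ℕ → Polynomial ℝ) (d : Dspace k) :
    g0 k φ d = ∑ j : Fin k,
      (d.1 j • (X * φ (k - 1 - j.val)) + d.2 j • φ (k - 1 - j.val)) := by
  simp [g0, LinearMap.sum_apply, LinearMap.toSpanSingleton_apply]

/-- Reindexing of pairs of `kn × kn` matrices. -/
def Eequiv (n k : ℕ) : Mspace n k ≃ₗ[ℝ] (Ispace n k → Dspace k) where
  toFun m := fun i => (fun j => m.1 i.1 (j, i.2), fun j => m.2 i.1 (j, i.2))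
  invFun f := (Matrix.of fun p q => (f (p, q.2)).1 q.1, Matrix.of fun p q => (f (p, q.2)).2 q.1)
  map_add' := by intros; rfl
  map_smul' := by intros; rfl
  left_inv := by intro m; rfl
  right_inv := by intro f; rfl

/-- Reindexing of `kn × n` polynomial matrices. -/
def Fequiv (n k : ℕ) : Nspace n k ≃ₗ[ℝ] (Ispace n k → Polynomial ℝ) where
  toFun G := fun i => G i.1 i.2
  invFun f := Matrix.of fun p s => f (p, s)
  map_add' := by intros; rfl
  map_smul' := by intros; rfl
  left_inv := by intro m; rfl
  right_inv := by intro f; rfl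

def Gmap (n k : ℕ) (φ : ℕ → Polynomial ℝ) :
    (Ispace n k → Dspace k) →ₗ[ℝ] (Ispace n k → Polynomial ℝ) :=
  LinearMap.pi fun i => (g0 k φ).comp (LinearMap.proj i)

/-- The map `(steX, Y) ↦ (Xλ + Y)(Φ ⊗ I)`. -/
def gBig (n k : ℕ) (φ : ℕ → Polynomial ℝ) : Mspace n k →ₗ[ℝ] Nspace n k :=
  (((Fequiv n k).symm.toLinearMap.comp (Gmap n k φ)).comp (Eequiv n k).toLinearMap)

def rhoPi (n k : ℕ) (φ : ℕ → Polynomial ℝ) (Pm : ℕ → Matrix (Fin n) (Fin n) ℝ) :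
    (Fin k → ℝ) →ₗ[ℝ] (Ispace n k → Polynomial ℝ) :=
  LinearMap.pi fun i =>
    (LinearMap.toSpanSingleton ℝ (Polynomial ℝ) (matP n k φ Pm i.1.2 i.2)).comp
      (LinearMap.proj i.1.1)

/-- The map `v ↦ v ⊗ P(λ)`. -/
def rhoMap (n k : ℕ) (φ : ℕ → Polynomial ℝ) (Pm : ℕ → Matrix (Fin n) (Fin n) ℝ) :
    (Fin k → ℝ) →ₗ[ℝ] Nspace n k :=
  (Fequiv n k).symm.toLinearMap.comp (rhoPi n k φ Pm)

lemma Fequiv_symm_apply (n k : ℕ) (f : Ispace n k → Polynomial ℝ) :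
    (Fequiv n k).symm f = Matrix.of fun p s => f (p, s) := rfl

lemma rhoMap_apply (n k : ℕ) (φ : ℕ → Polynomial ℝ) (Pm : ℕ → Matrix (Fin n) (Fin n) ℝ)
    (v : Fin k → ℝ) : rhoMap n k φ Pm v = vKron n k v (matP n k φ Pm) := by
  refine Matrix.ext fun p s => ?_
  show rhoPi n k φ Pm v (p, s) = C (v p.1) * matP n k φ Pm p.2 s
  simp [rhoPi, LinearMap.toSpanSingleton_apply, Polynomial.smul_eq_C_mul]

lemma gBig_apply (n k : ℕ) (φ : ℕ → Polynomial ℝ) (m : Mspace n k) :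
    gBig n k φ m = pencilPoly m.1 m.2 * PhiMat n k φ := by
  refine Matrix.ext fun p s => ?_
  show g0 k φ (Eequiv n k m (p, s)) = _
  rw [g0_apply, Matrix.mul_apply]
  rw [Fintype.sum_prod_type]
  refine Finset.sum_congr rfl fun j _ => ?_
  have : ∀ t : Fin n, pencilPoly m.1 m.2 p (j, t) * PhiMat n k φ (j, t) s =
      if t = s then pencilPoly m.1 m.2 p (j, t) * φ (k - 1 - j.val) else 0 := by
    intro t
    simp only [PhiMat, Matrix.of_apply]
    split <;> simp
  simp only [this, Finset.sum_ite_eq' Finset.univ s, Finset.mem_univ, if_true]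
  show m.1 p (j, s) • (X * φ (k - 1 - j.val)) + m.2 p (j, s) • φ (k - 1 - j.val) =
    (C (m.1 p (j, s)) * X + C (m.2 p (j, s))) * φ (k - 1 - j.val)
  simp only [Polynomial.smul_eq_C_mul]
  ring

section Span

open Submodule

lemma degreeLT_le_span {m : ℕ} (ψ : Fin m → Polynomial ℝ)
    (hψ : ∀ i, (ψ i).degree = i.val) :
    degreeLT ℝ m ≤ Submodule.span ℝ (Set.range ψ) := by
  suffices H : ∀ N, ∀ p : Polynomial ℝ, p.natDegree < N → p.degree < m →
      p ∈ Submodule.span ℝ (Set.range ψ) by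
    intro p hp
    exact H (p.natDegree + 1) p (Nat.lt_succ_self _) (mem_degreeLT.1 hp)
  intro N
  induction N with
  | zero => intro p h; omega
  | succ N ih =>
    intro p hpN hpm
    by_cases hp0 : p = 0
    · simp [hp0]
    have hdm : p.natDegree < m := (natDegree_lt_iff_degree_lt hp0).2 hpm
    set d := p.natDegree with hd
    set i : Fin m := ⟨d, hdm⟩
    have hψd : (ψ i).degree = (d : WithBot ℕ) := hψ i
    have hψ0 : ψ i ≠ 0 := by
      intro h
      rw [h, degree_zero] at hψd
      exact (by simp at hψd)
    set e := p.leadingCoeff / (ψ i).leadingCoeff with he'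
    have he : e ≠ 0 :=
      div_ne_zero (leadingCoeff_ne_zero.2 hp0) (leadingCoeff_ne_zero.2 hψ0)
    set q := C e * ψ i with hq
    have hqmem : q ∈ Submodule.span ℝ (Set.range ψ) := by
      rw [hq, ← Polynomial.smul_eq_C_mul]
      exact Submodule.smul_mem _ _ (Submodule.subset_span ⟨i, rfl⟩)
    have hdq : p.degree = q.degree := by
      rw [hq, degree_C_mul he, hψd, degree_eq_natDegree hp0]
    have hlc : p.leadingCoeff = q.leadingCoeff := by
      rw [hq, leadingCoeff_mul, leadingCoeff_C, he']
      exact (div_mul_cancel₀ _ (leadingCoeff_ne_zero.2 hψ0)).symm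
    have hsub : (p - q).degree < p.degree := degree_sub_lt hdq hp0 hlc
    by_cases hpq : p - q = 0
    · have : p = q := by rwa [sub_eq_zero] at hpq
      rw [this]; exact hqmem
    have h1 : (p - q).natDegree < N := by
      have : (p - q).natDegree < p.natDegree := by
        have := (natDegree_lt_iff_degree_lt hpq).2
          (by rw [degree_eq_natDegree hp0] at hsub; exact hsub)
        exact this
      omega
    have h2 : (p - q).degree < (m : WithBot ℕ) := lt_trans hsub hpm
    have := ih (p - q) h1 h2
    have : p = (p - q) + q := by ring
    rw [this]
    exact Submodule.add_mem _ (ih (p - q) h1 h2) hqmem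

end Span

lemma range_g0 (k : ℕ) (hk : 2 ≤ k) (φ : ℕ → Polynomial ℝ)
    (hdeg : ∀ j, (φ j).degree = j) :
    LinearMap.range (g0 k φ) = degreeLT ℝ (k + 1) := by
  apply le_antisymm
  · rintro _ ⟨d, rfl⟩
    rw [g0_apply]
    refine Submodule.sum_mem _ fun j _ => Submodule.add_mem _
      (Submodule.smul_mem _ _ ?_) (Submodule.smul_mem _ _ ?_)
    · rw [mem_degreeLT, degree_mul, degree_X, hdeg]
      have : (1 : WithBot ℕ) + (k - 1 - j.val : ℕ) = ((1 + (k - 1 - j.val) : ℕ) : WithBot ℕ) := by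
        push_cast; ring
      rw [this]
      exact_mod_cast (by omega : 1 + (k - 1 - j.val) < k + 1)
    · rw [mem_degreeLT, hdeg]
      exact_mod_cast (by omega : k - 1 - j.val < k + 1)
  · classical
    set ψ : Fin (k + 1) → Polynomial ℝ :=
      fun i => if i.val < k then φ i.val else X * φ (k - 1) with hψdef
    have hψ : ∀ i, (ψ i).degree = i.val := by
      intro i
      rw [hψdef]
      by_cases h : i.val < k
      · simp only [h, if_true]; exact hdeg i.val
      · have hik : i.val = k := by omega
        simp only [h, if_false]
        rw [degree_mul, degree_X, hdeg]
        rw [hik]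
        have : (1 : WithBot ℕ) + (k - 1 : ℕ) = ((1 + (k - 1) : ℕ) : WithBot ℕ) := by
          push_cast; ring
        rw [this]
        congr 1
        omega
    refine le_trans (degreeLT_le_span ψ hψ) (Submodule.span_le.2 ?_)
    rintro _ ⟨i, rfl⟩
    by_cases h : i.val < k
    · refine ⟨(0, Pi.single (⟨k - 1 - i.val, by omega⟩ : Fin k) 1), ?_⟩
      rw [g0_apply]
      simp only [Prod.fst, Prod.snd, Pi.zero_apply, zero_smul, zero_add]
      rw [Finset.sum_eq_single_of_mem (⟨k - 1 - i.val, by omega⟩ : Fin k)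
        (Finset.mem_univ _) (fun b _ hb => by rw [Pi.single_eq_of_ne hb, zero_smul])]
      simp only [Pi.single_eq_same, one_smul, hψdef, h, if_true]
      congr 1
      omega
    · refine ⟨(Pi.single (⟨0, by omega⟩ : Fin k) 1, 0), ?_⟩
      rw [g0_apply]
      simp only [Prod.fst, Prod.snd, Pi.zero_apply, zero_smul, add_zero]
      rw [Finset.sum_eq_single_of_mem (⟨0, by omega⟩ : Fin k)
        (Finset.mem_univ _) (fun b _ hb => by rw [Pi.single_eq_of_ne hb, zero_smul])]
      simp only [Pi.single_eq_same, one_smul, hψdef, h, if_false, Nat.sub_zero]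

lemma finrank_ker_g0 (k : ℕ) (hk : 2 ≤ k) (φ : ℕ → Polynomial ℝ)
    (hdeg : ∀ j, (φ j).degree = j) :
    Module.finrank ℝ (LinearMap.ker (g0 k φ)) = k - 1 := by
  have h1 := LinearMap.finrank_range_add_finrank_ker (g0 k φ)
  rw [range_g0 k hk φ hdeg] at h1
  have h2 : Module.finrank ℝ (degreeLT ℝ (k + 1)) = k + 1 := by
    rw [LinearEquiv.finrank_eq (degreeLTEquiv ℝ (k + 1)), Module.finrank_pi]
    simp
  have h3 : Module.finrank ℝ (Dspace k) = k + k := by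
    rw [Module.finrank_prod, Module.finrank_pi]
    simp
  rw [h2, h3] at h1
  omega

/-- Equivalence between `Submodule.pi univ p` and the product of the `p i`. -/
def piSubEquiv {ι : Type*} {M : ι → Type*} [∀ i, AddCommGroup (M i)]
    [∀ i, Module ℝ (M i)] (p : ∀ i, Submodule ℝ (M i)) :
    (Submodule.pi Set.univ p) ≃ₗ[ℝ] ((i : ι) → p i) where
  toFun x i := ⟨x.1 i, x.2 i (Set.mem_univ i)⟩
  invFun f := ⟨fun i => f i, fun i _ => (f i).2⟩
  map_add' := by intros; rfl
  map_smul' := by intros; rfl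
  left_inv := by intro x; rfl
  right_inv := by intro f; rfl

lemma ker_Gmap (n k : ℕ) (φ : ℕ → Polynomial ℝ) :
    LinearMap.ker (Gmap n k φ) =
      Submodule.pi Set.univ (fun _ : Ispace n k => LinearMap.ker (g0 k φ)) := by
  ext f
  simp only [LinearMap.mem_ker, Gmap, Submodule.mem_pi, Set.mem_univ, forall_true_left,
    funext_iff, LinearMap.pi_apply, LinearMap.comp_apply, LinearMap.proj_apply,
    Pi.zero_apply]

lemma mem_range_Gmap (n k : ℕ) (φ : ℕ → Polynomial ℝ) (x : Ispace n k → Polynomial ℝ) :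
    x ∈ LinearMap.range (Gmap n k φ) ↔ ∀ i, x i ∈ LinearMap.range (g0 k φ) := by
  constructor
  · rintro ⟨f, rfl⟩ i; exact ⟨f i, rfl⟩
  · intro h
    choose f hf using h
    exact ⟨f, funext hf⟩

lemma finrank_ker_gBig (n k : ℕ) (hk : 2 ≤ k) (φ : ℕ → Polynomial ℝ)
    (hdeg : ∀ j, (φ j).degree = j) :
    Module.finrank ℝ (LinearMap.ker (gBig n k φ)) = k * n * n * (k - 1) := by
  have h1 : LinearMap.ker (gBig n k φ) =
      Submodule.comap (Eequiv n k).toLinearMap (LinearMap.ker (Gmap n k φ)) := by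
    ext m
    simp only [LinearMap.mem_ker, gBig, LinearMap.comp_apply, Submodule.mem_comap,
      LinearEquiv.coe_coe]
    rw [LinearEquiv.map_eq_zero_iff]
  rw [h1, Submodule.comap_equiv_eq_map_symm, LinearEquiv.finrank_map_eq, ker_Gmap]
  rw [LinearEquiv.finrank_eq (piSubEquiv (fun _ : Ispace n k => LinearMap.ker (g0 k φ))), Module.finrank_pi_fintype]
  rw [finrank_ker_g0 k hk φ hdeg, Finset.sum_const, smul_eq_mul]
  simp only [Finset.card_univ, Fintype.card_prod, Fintype.card_fin]

lemma matP_mem_degreeLT (n k : ℕ) (φ : ℕ → Polynomial ℝ)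
    (hdeg : ∀ j, (φ j).degree = j) (Pm : ℕ → Matrix (Fin n) (Fin n) ℝ) (r s : Fin n) :
    matP n k φ Pm r s ∈ degreeLT ℝ (k + 1) := by
  show (∑ i ∈ Finset.range (k + 1), C (Pm i r s) * φ i) ∈ _
  refine Submodule.sum_mem _ fun i hi => ?_
  rw [Finset.mem_range] at hi
  rw [mem_degreeLT]
  refine lt_of_le_of_lt (degree_mul_le _ _) ?_
  calc (C (Pm i r s)).degree + (φ i).degree ≤ 0 + (i : WithBot ℕ) :=
        add_le_add degree_C_le (hdeg i).le
    _ = (i : WithBot ℕ) := by rw [zero_add]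
    _ < ((k + 1 : ℕ) : WithBot ℕ) := by exact_mod_cast hi

lemma range_rho_le (n k : ℕ) (hk : 2 ≤ k) (φ : ℕ → Polynomial ℝ)
    (hdeg : ∀ j, (φ j).degree = j) (Pm : ℕ → Matrix (Fin n) (Fin n) ℝ) :
    LinearMap.range (rhoMap n k φ Pm) ≤ LinearMap.range (gBig n k φ) := by
  have hg : LinearMap.range (gBig n k φ) =
      Submodule.map (Fequiv n k).symm.toLinearMap (LinearMap.range (Gmap n k φ)) := by
    rw [gBig, LinearMap.range_comp, LinearEquiv.range, Submodule.map_top,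
      LinearMap.range_comp]
  have hr : LinearMap.range (rhoMap n k φ Pm) =
      Submodule.map (Fequiv n k).symm.toLinearMap (LinearMap.range (rhoPi n k φ Pm)) := by
    rw [rhoMap, LinearMap.range_comp]
  rw [hg, hr]
  refine Submodule.map_mono ?_
  rintro _ ⟨v, rfl⟩
  rw [mem_range_Gmap]
  intro i
  rw [range_g0 k hk φ hdeg]
  show (v i.1.1 • matP n k φ Pm i.1.2 i.2) ∈ _
  exact Submodule.smul_mem _ _ (matP_mem_degreeLT n k φ hdeg Pm i.1.2 i.2)

lemma matP_entry_ne (n k : ℕ) (φ : ℕ → Polynomial ℝ)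
    (hdeg : ∀ j, (φ j).degree = j) (Pm : ℕ → Matrix (Fin n) (Fin n) ℝ)
    {r s : Fin n} (hrs : Pm k r s ≠ 0) : matP n k φ Pm r s ≠ 0 := by
  intro h0
  have hc := congrArg (fun p => Polynomial.coeff p k) h0
  simp only [coeff_zero] at hc
  have : Polynomial.coeff (matP n k φ Pm r s) k = Pm k r s * (φ k).coeff k := by
    show Polynomial.coeff (∑ i ∈ Finset.range (k + 1), C (Pm i r s) * φ i) k = _
    rw [finset_sum_coeff, Finset.sum_range_succ]
    rw [Finset.sum_eq_zero, zero_add, coeff_C_mul]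
    intro i hi
    rw [Finset.mem_range] at hi
    rw [coeff_C_mul, coeff_eq_zero_of_degree_lt, mul_zero]
    rw [hdeg i]
    exact_mod_cast hi
  rw [this] at hc
  have hk0 : (φ k) ≠ 0 := by
    intro h
    have hdk := hdeg k
    rw [h, degree_zero] at hdk
    simp at hdk
  have hnd : (φ k).natDegree = k := natDegree_eq_of_degree_eq_some (hdeg k)
  have hcoefflc : (φ k).coeff k = (φ k).leadingCoeff := by
    rw [Polynomial.leadingCoeff, hnd]
  have : (φ k).coeff k ≠ 0 := by
    rw [hcoefflc]; exact leadingCoeff_ne_zero.2 hk0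
  exact this (by
    rcases mul_eq_zero.1 hc with h | h
    · exact absurd h hrs
    · exact h)

lemma rho_injective (n k : ℕ) (φ : ℕ → Polynomial ℝ)
    (hdeg : ∀ j, (φ j).degree = j) (Pm : ℕ → Matrix (Fin n) (Fin n) ℝ)
    (hn : 0 < n) (hPk : Pm k ≠ 0) : Function.Injective (rhoMap n k φ Pm) := by
  obtain ⟨r, s, hrs⟩ : ∃ r s, Pm k r s ≠ 0 := by
    by_contra h
    push_neg at h
    exact hPk (Matrix.ext fun r s => h r s)
  have hmat := matP_entry_ne n k φ hdeg Pm hrs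
  rw [← LinearMap.ker_eq_bot]
  rw [LinearMap.ker_eq_bot']
  intro v hv
  have hv' : rhoPi n k φ Pm v = 0 := by
    have : (Fequiv n k).symm (rhoPi n k φ Pm v) = 0 := hv
    rwa [LinearEquiv.map_eq_zero_iff] at this
  funext i
  have := congrFun hv' ((i, r), s)
  show v i = 0
  have h2 : v i • matP n k φ Pm r s = 0 := this
  rcases smul_eq_zero.1 h2 with h | h
  · exact h
  · exact absurd h hmat

lemma finrank_comap_of_le_range {M N : Type*} [AddCommGroup M] [Module ℝ M]
    [AddCommGroup N] [Module ℝ N] [FiniteDimensional ℝ M]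
    (f : M →ₗ[ℝ] N) (W : Submodule ℝ N) [FiniteDimensional ℝ W]
    (hW : W ≤ LinearMap.range f) :
    Module.finrank ℝ (Submodule.comap f W) =
      Module.finrank ℝ (LinearMap.ker f) + Module.finrank ℝ W := by
  have hker : LinearMap.ker f ≤ Submodule.comap f W := by
    intro x hx
    rw [LinearMap.mem_ker] at hx
    rw [Submodule.mem_comap, hx]
    exact W.zero_mem
  set q : Submodule.comap f W →ₗ[ℝ] W := f.restrict (fun x hx => hx) with hqdef
  have h1 : LinearMap.range q = ⊤ := by
    rw [LinearMap.range_eq_top]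
    rintro ⟨w, hw⟩
    obtain ⟨x, hx⟩ := hW hw
    refine ⟨⟨x, by rw [Submodule.mem_comap, hx]; exact hw⟩, ?_⟩
    exact Subtype.ext (by simp [hqdef, LinearMap.restrict_apply, hx])
  have h2 : LinearMap.ker q =
      Submodule.comap (Submodule.comap f W).subtype (LinearMap.ker f) := by
    ext x
    simp [hqdef, LinearMap.mem_ker, LinearMap.restrict_apply, Subtype.ext_iff]
  have h3 := LinearMap.finrank_range_add_finrank_ker q
  rw [h1, finrank_top, h2] at h3
  have h4 := LinearEquiv.finrank_eq (Submodule.comapSubtypeEquivOfLe hker)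
  omega

lemma main1 (n k : ℕ) (hn : 0 < n) (hk : 2 ≤ k) (φ : ℕ → Polynomial ℝ)
    (hdeg : ∀ j, (φ j).degree = j)
    (Pm : ℕ → Matrix (Fin n) (Fin n) ℝ) (hPk : Pm k ≠ 0) :
    ∃ S : Submodule ℝ (Mspace n k),
      (S : Set (Mspace n k)) =
        {L | ∃ v : Fin k → ℝ, Ansatz1 n k φ Pm (pencilPoly L.1 L.2) v} ∧
      Module.finrank ℝ S = k * (k - 1) * n ^ 2 + k := by
  set W := LinearMap.range (rhoMap n k φ Pm) with hW
  refine ⟨Submodule.comap (gBig n k φ) W, ?_, ?_⟩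
  · ext m
    simp only [SetLike.mem_coe, Submodule.mem_comap, hW, LinearMap.mem_range,
      Set.mem_setOf_eq, Ansatz1]
    constructor
    · rintro ⟨v, hv⟩
      refine ⟨v, ?_⟩
      rw [← gBig_apply, ← hv, rhoMap_apply]
    · rintro ⟨v, hv⟩
      refine ⟨v, ?_⟩
      rw [rhoMap_apply, gBig_apply]
      exact hv.symm
  · rw [finrank_comap_of_le_range (gBig n k φ) W
      (range_rho_le n k hk φ hdeg Pm)]
    rw [finrank_ker_gBig n k hk φ hdeg]
    rw [hW, LinearMap.finrank_range_of_inj (rho_injective n k φ hdeg Pm hn hPk)]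
    rw [Module.finrank_pi]
    simp only [Fintype.card_fin]
    have : k * n * n * (k - 1) = k * (k - 1) * n ^ 2 := by ring
    rw [this]

lemma phi_deg (a b c : ℕ → ℝ) (ha : ∀ j, a j ≠ 0) (φ : ℕ → Polynomial ℝ)
    (hφ0 : φ 0 = 1)
    (hφ1 : C (a 0) * φ 1 = (X - C (b 0)) * φ 0)
    (hφrec : ∀ j, C (a (j + 1)) * φ (j + 2) =
      (X - C (b (j + 1))) * φ (j + 1) - C (c (j + 1)) * φ j) :
    ∀ j, (φ j).degree = j := by
  have key : ∀ j, (φ j).degree = j ∧ (φ (j + 1)).degree = (j + 1 : ℕ) := by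
    intro j
    induction j with
    | zero =>
      constructor
      · rw [hφ0, degree_one]; rfl
      · have h : (C (a 0) * φ 1).degree = 1 := by
          rw [hφ1, hφ0, mul_one, degree_X_sub_C]
        rwa [degree_C_mul (ha 0)] at h
    | succ j ih =>
      refine ⟨ih.2, ?_⟩
      have hdeg1 : ((X - C (b (j + 1))) * φ (j + 1)).degree = ((j + 2 : ℕ) : WithBot ℕ) := by
        rw [degree_mul, degree_X_sub_C, ih.2]
        push_cast
        ring
      have hdeg2 : (C (c (j + 1)) * φ j).degree < ((j + 2 : ℕ) : WithBot ℕ) := by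
        refine lt_of_le_of_lt (degree_mul_le _ _) ?_
        calc (C (c (j + 1))).degree + (φ j).degree ≤ 0 + (j : WithBot ℕ) :=
              add_le_add degree_C_le ih.1.le
          _ = (j : WithBot ℕ) := by rw [zero_add]
          _ < ((j + 2 : ℕ) : WithBot ℕ) := by exact_mod_cast (by omega : j < j + 2)
      have h : (C (a (j + 1)) * φ (j + 2)).degree = ((j + 2 : ℕ) : WithBot ℕ) := by
        rw [hφrec j, degree_sub_eq_left_of_degree_lt (hdeg1 ▸ hdeg2), hdeg1]
      rwa [degree_C_mul (ha (j + 1))] at h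
  exact fun j => (key j).1

lemma pencilPoly_transpose {n k : ℕ} (Xm Ym : Matrix (Fin k × Fin n) (Fin k × Fin n) ℝ) :
    (pencilPoly Xm Ym)ᵀ = pencilPoly Xmᵀ Ymᵀ := rfl

lemma matP_transpose (n k : ℕ) (φ : ℕ → Polynomial ℝ) (Pm : ℕ → Matrix (Fin n) (Fin n) ℝ) :
    (matP n k φ Pm)ᵀ = matP n k φ (fun i => (Pm i)ᵀ) := rfl

lemma vKron_transpose (n k : ℕ) (w : Fin k → ℝ) (Q : Matrix (Fin n) (Fin n) (Polynomial ℝ)) :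
    (vKron n k w Q)ᵀ = vKronRow n k w Qᵀ := rfl

lemma vKronRow_transpose (n k : ℕ) (w : Fin k → ℝ) (Q : Matrix (Fin n) (Fin n) (Polynomial ℝ)) :
    (vKronRow n k w Q)ᵀ = vKron n k w Qᵀ := rfl

lemma ansatz2_iff (n k : ℕ) (φ : ℕ → Polynomial ℝ) (Pm : ℕ → Matrix (Fin n) (Fin n) ℝ)
    (Xm Ym : Matrix (Fin k × Fin n) (Fin k × Fin n) ℝ) (w : Fin k → ℝ) :
    Ansatz2 n k φ Pm (pencilPoly Xm Ym) w ↔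
      Ansatz1 n k φ (fun i => (Pm i)ᵀ) (pencilPoly Xmᵀ Ymᵀ) w := by
  unfold Ansatz1 Ansatz2
  constructor
  · intro h
    have h' := congrArg Matrix.transpose h
    rw [Matrix.transpose_mul, Matrix.transpose_transpose, vKronRow_transpose,
      matP_transpose, pencilPoly_transpose] at h'
    exact h'
  · intro h
    have h' := congrArg Matrix.transpose h
    rw [Matrix.transpose_mul, ← pencilPoly_transpose, Matrix.transpose_transpose,
      vKron_transpose, ← matP_transpose, Matrix.transpose_transpose] at h'
    exact h'

end AnsatzDimAux


theorem statement_2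
    (n k : ℕ) (hn : 0 < n) (hk : 2 ≤ k)
    (a b c : ℕ → ℝ) (ha : ∀ j, a j ≠ 0)
    (φ : ℕ → Polynomial ℝ) (hφ0 : φ 0 = 1)
    (hφ1 : C (a 0) * φ 1 = (X - C (b 0)) * φ 0)
    (hφrec : ∀ j, C (a (j + 1)) * φ (j + 2) =
      (X - C (b (j + 1))) * φ (j + 1) - C (c (j + 1)) * φ j)
    (Pm : ℕ → Matrix (Fin n) (Fin n) ℝ) (hPk : Pm k ≠ 0)
    :
    ∃ S₁ S₂ : Submodule ℝ (Matrix (Fin k × Fin n) (Fin k × Fin n) ℝ × Matrix (Fin k × Fin n) (Fin k × Fin n) ℝ),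
      (S₁ : Set (Matrix (Fin k × Fin n) (Fin k × Fin n) ℝ × Matrix (Fin k × Fin n) (Fin k × Fin n) ℝ)) =
        {L | ∃ v : Fin k → ℝ, Ansatz1 n k φ Pm (pencilPoly L.1 L.2) v} ∧
      (S₂ : Set (Matrix (Fin k × Fin n) (Fin k × Fin n) ℝ × Matrix (Fin k × Fin n) (Fin k × Fin n) ℝ)) =
        {L | ∃ v : Fin k → ℝ, Ansatz2 n k φ Pm (pencilPoly L.1 L.2) v} ∧
      Module.finrank ℝ S₁ = k * (k - 1) * n ^ 2 + k ∧
      Module.finrank ℝ S₂ = k * (k - 1) * n ^ 2 + k := by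
  classical
  have hdeg := AnsatzDimAux.phi_deg a b c ha φ hφ0 hφ1 hφrec
  obtain ⟨S₁, hS₁set, hS₁rank⟩ := AnsatzDimAux.main1 n k hn hk φ hdeg Pm hPk
  have hPkT : (fun i => (Pm i)ᵀ) k ≠ 0 := by
    intro h
    apply hPk
    have h2 := congrArg Matrix.transpose h
    rwa [Matrix.transpose_transpose, Matrix.transpose_zero] at h2
  obtain ⟨S, hSset, hSrank⟩ :=
    AnsatzDimAux.main1 n k hn hk φ hdeg (fun i => (Pm i)ᵀ) hPkT
  set τ : AnsatzDimAux.Mspace n k ≃ₗ[ℝ] AnsatzDimAux.Mspace n k :=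
    LinearEquiv.prodCongr
      (Matrix.transposeLinearEquiv (Fin k × Fin n) (Fin k × Fin n) ℝ ℝ)
      (Matrix.transposeLinearEquiv (Fin k × Fin n) (Fin k × Fin n) ℝ ℝ) with hτ
  refine ⟨S₁, Submodule.comap τ.toLinearMap S, hS₁set, ?_, hS₁rank, ?_⟩
  · ext m
    simp only [SetLike.mem_coe, Submodule.mem_comap, LinearEquiv.coe_coe, Set.mem_setOf_eq]
    have hmem : τ m ∈ S ↔ τ m ∈ (S : Set (AnsatzDimAux.Mspace n k)) := Iff.rfl
    rw [hmem, hSset]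
    simp only [Set.mem_setOf_eq]
    have hτm : τ m = (m.1ᵀ, m.2ᵀ) := rfl
    rw [hτm]
    exact exists_congr fun v =>
      (AnsatzDimAux.ansatz2_iff n k φ Pm m.1 m.2 v).symm
  · rw [Submodule.comap_equiv_eq_map_symm, LinearEquiv.finrank_map_eq]
    exact hSrank
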